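/- (Second Clarkson inequality, scalar form) For every real p with 1 < p ≤ 2 and every x ∈ [0,1], (((1+x)/2)^{p/(p-1)} + ((1−x)/2)^{p/(p-1)})^{p-1} ≤ (1 + x^p)/2. -/

import Mathlib

open Complex HadamardThreeLines Real

private lemma cs2 (x₁ x₂ y₁ y₂ : ℝ) :
    x₁*y₁ + x₂*y₂ ≤ Real.sqrt (x₁^2+x₂^2) * Real.sqrt (y₁^2+y₂^2) := by
  rw [← Real.sqrt_mul (by positivity)]
  rcases le_or_gt (x₁*y₁ + x₂*y₂) 0 with h | h
  · exact h.trans (Real.sqrt_nonneg _)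
  · rw [show x₁*y₁ + x₂*y₂ = Real.sqrt ((x₁*y₁ + x₂*y₂)^2) from
      (Real.sqrt_sq h.le).symm]
    apply Real.sqrt_le_sqrt
    nlinarith [sq_nonneg (x₁*y₂ - x₂*y₁)]

private lemma parallelogram (u v : ℂ) :
    ‖u+v‖ ^ (2:ℕ) + ‖u-v‖ ^ (2:ℕ)
      = 2 * ‖u‖ ^ (2:ℕ) + 2 * ‖v‖ ^ (2:ℕ) := by
  simp only [Complex.sq_norm, Complex.normSq_apply, Complex.add_re, Complex.add_im,
    Complex.sub_re, Complex.sub_im]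
  ring

private lemma rpow_bound {x : ℝ} (hx : 0 < x) {c e : ℝ} (h1 : c/2 ≤ e) (h2 : e ≤ c) :
    x ^ e ≤ x ^ (c/2) + x ^ c := by
  rcases le_or_gt 1 x with h | h
  · have h3 := Real.rpow_le_rpow_of_exponent_le h h2
    have h4 : (0:ℝ) ≤ x ^ (c/2) := by positivity
    linarith
  · have h3 := Real.rpow_le_rpow_of_exponent_ge hx h.le h1
    have h4 : (0:ℝ) ≤ x ^ c := by positivity
    linarith

private theorem rt2 (p q a b : ℝ) (hp1 : 1 < p) (hp2 : p ≤ 2)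
    (hq : q = p / (p-1)) (hb : 0 < b) (hba : b < a) :
    (a+b)^q + (a-b)^q ≤ 2 * (a^p + b^p)^(q/p) := by
  have hp0 : (0:ℝ) < p := lt_trans one_pos hp1
  have hp1' : (0:ℝ) < p - 1 := by linarith
  have hq2 : 2 ≤ q := by rw [hq, le_div_iff₀ hp1']; nlinarith
  have hq0 : (0:ℝ) < q := by linarith
  have hpq : 1/p + 1/q = 1 := by rw [hq]; field_simp; ring
  have ha : (0:ℝ) < a := hb.trans hba
  have hab : (0:ℝ) < a + b := by linarith
  have hamb : (0:ℝ) < a - b := by linarith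
  set A := a^p + b^p with hA
  set S := (a+b)^q + (a-b)^q with hS
  have hApos : 0 < A := by positivity
  have hSpos : 0 < S := by positivity
  -- the entire function for the three-lines argument
  set G : ℝ → ℂ → ℂ := fun c z => (c:ℂ) - ((c/2:ℝ):ℂ) * z with hG
  set F : ℂ → ℂ := fun z =>
      ((a:ℂ) ^ (G p z) + (b:ℂ) ^ (G p z)) * ((a+b:ℝ):ℂ) ^ (G q z)
    + ((a:ℂ) ^ (G p z) - (b:ℂ) ^ (G p z)) * ((a-b:ℝ):ℂ) ^ (G q z) with hF
  have hGre : ∀ (c : ℝ) (z : ℂ), (G c z).re = c - c/2 * z.re := by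
    intro c z
    simp [hG, Complex.sub_re, Complex.mul_re]
  have habs : ∀ (x c : ℝ), 0 < x → ∀ z : ℂ,
      ‖(x:ℂ) ^ (G c z)‖ = x ^ (c - c/2 * z.re) := by
    intro x c hx z
    rw [Complex.norm_cpow_eq_rpow_re_of_pos hx, hGre]
  -- differentiability
  have hGdiff : ∀ c : ℝ, Differentiable ℂ (G c) := by
    intro c
    exact (differentiable_const _).sub ((differentiable_const _).mul differentiable_id)
  have hcpow : ∀ (x c : ℝ), 0 < x → Differentiable ℂ (fun z => (x:ℂ) ^ (G c z)) := by
    intro x c hx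
    exact Differentiable.const_cpow (hGdiff c) (Or.inl (by exact_mod_cast hx.ne'))
  have hFdiff : Differentiable ℂ F := by
    apply Differentiable.add
    · exact (((hcpow a p ha).add (hcpow b p hb)).mul (hcpow (a+b) q hab))
    · exact (((hcpow a p ha).sub (hcpow b p hb)).mul (hcpow (a-b) q hamb))
  have hd : DiffContOnCl ℂ F (verticalStrip 0 1) := hFdiff.diffContOnCl
  -- boundedness on the strip
  have hBdd : BddAbove ((norm ∘ F) '' verticalClosedStrip 0 1) := by
    set K : ℝ → ℝ → ℝ := fun x c => x ^ (c/2) + x ^ c with hK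
    refine ⟨(K a p + K b p) * K (a+b) q + (K a p + K b p) * K (a-b) q, ?_⟩
    rintro y ⟨z, hz, rfl⟩
    have hzre : z.re ∈ Set.Icc (0:ℝ) 1 := hz
    have key : ∀ (x c : ℝ), 0 < x → 0 < c → ‖(x:ℂ) ^ (G c z)‖ ≤ K x c := by
      intro x c hx hc
      rw [habs x c hx z]
      apply rpow_bound hx
      · nlinarith [hzre.1, hzre.2]
      · nlinarith [hzre.1, hzre.2]
    have hKpos : ∀ (x c : ℝ), 0 < x → 0 ≤ K x c := by
      intro x c hx; have : (0:ℝ) < x ^ (c/2) := by positivity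
      have : (0:ℝ) < x ^ c := by positivity
      positivity
    have t1 : ‖(a:ℂ) ^ (G p z) + (b:ℂ) ^ (G p z)‖ ≤ K a p + K b p :=
      (norm_add_le _ _).trans (add_le_add (key a p ha hp0) (key b p hb hp0))
    have t2 : ‖(a:ℂ) ^ (G p z) - (b:ℂ) ^ (G p z)‖ ≤ K a p + K b p := by
      refine le_trans ?_ (add_le_add (key a p ha hp0) (key b p hb hp0))
      simpa [sub_eq_add_neg] using (norm_add_le ((a:ℂ) ^ (G p z)) (-((b:ℂ) ^ (G p z))))
    simp only [Function.comp_apply, hF]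
    refine (norm_add_le _ _).trans ?_
    rw [norm_mul, norm_mul]
    refine add_le_add (mul_le_mul t1 (key (a+b) q hab hq0) (norm_nonneg _)
        (by positivity)) (mul_le_mul t2 (key (a-b) q hamb hq0) (norm_nonneg _)
        (by positivity))
  -- bound on the line re = 0
  have h0 : ∀ z ∈ Complex.re ⁻¹' {(0:ℝ)}, ‖F z‖ ≤ A * S := by
    intro z hz
    have hz0 : z.re = 0 := hz
    have e1 : ‖(a:ℂ) ^ (G p z)‖ = a ^ p := by rw [habs a p ha z, hz0]; ring_nf
    have e2 : ‖(b:ℂ) ^ (G p z)‖ = b ^ p := by rw [habs b p hb z, hz0]; ring_nf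
    have e3 : ‖((a+b:ℝ):ℂ) ^ (G q z)‖ = (a+b) ^ q := by
      rw [habs (a+b) q hab z, hz0]; ring_nf
    have e4 : ‖((a-b:ℝ):ℂ) ^ (G q z)‖ = (a-b) ^ q := by
      rw [habs (a-b) q hamb z, hz0]; ring_nf
    have t1 : ‖(a:ℂ) ^ (G p z) + (b:ℂ) ^ (G p z)‖ ≤ A := by
      rw [hA, ← e1, ← e2]; exact norm_add_le _ _
    have t2 : ‖(a:ℂ) ^ (G p z) - (b:ℂ) ^ (G p z)‖ ≤ A := by
      rw [hA, ← e1, ← e2]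
      simpa [sub_eq_add_neg] using (norm_add_le ((a:ℂ) ^ (G p z)) (-((b:ℂ) ^ (G p z))))
    simp only [hF]
    refine (norm_add_le _ _).trans ?_
    rw [norm_mul, norm_mul, e3, e4]
    calc ‖_‖ * (a+b)^q + ‖_‖ * (a-b)^q
        ≤ A * (a+b)^q + A * (a-b)^q := by
          refine add_le_add (mul_le_mul_of_nonneg_right t1 (by positivity))
            (mul_le_mul_of_nonneg_right t2 (by positivity))
      _ = A * S := by rw [hS]; ring
  -- bound on the line re = 1
  have h1 : ∀ z ∈ Complex.re ⁻¹' {(1:ℝ)}, ‖F z‖ ≤ Real.sqrt (2*A) * Real.sqrt S := by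
    intro z hz
    have hz1 : z.re = 1 := hz
    have e1 : ‖(a:ℂ) ^ (G p z)‖ = a ^ (p/2) := by rw [habs a p ha z, hz1]; ring_nf
    have e2 : ‖(b:ℂ) ^ (G p z)‖ = b ^ (p/2) := by rw [habs b p hb z, hz1]; ring_nf
    have e3 : ‖((a+b:ℝ):ℂ) ^ (G q z)‖ = (a+b) ^ (q/2) := by
      rw [habs (a+b) q hab z, hz1]; ring_nf
    have e4 : ‖((a-b:ℝ):ℂ) ^ (G q z)‖ = (a-b) ^ (q/2) := by
      rw [habs (a-b) q hamb z, hz1]; ring_nf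
    have sq : ∀ x c : ℝ, 0 < x → (x ^ (c/2)) ^ (2:ℕ) = x ^ c := by
      intro x c hx
      rw [← Real.rpow_natCast (x ^ (c/2)) 2, ← Real.rpow_mul hx.le]
      norm_num
    simp only [hF]
    refine (norm_add_le _ _).trans ?_
    rw [norm_mul, norm_mul, e3, e4]
    refine le_trans (cs2 _ _ _ _) ?_
    have epar : ‖(a:ℂ) ^ (G p z) + (b:ℂ) ^ (G p z)‖ ^ (2:ℕ)
        + ‖(a:ℂ) ^ (G p z) - (b:ℂ) ^ (G p z)‖ ^ (2:ℕ) = 2 * A := by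
      rw [parallelogram, e1, e2, sq a p ha, sq b p hb, hA]; ring
    rw [epar]
    have eS : ((a+b) ^ (q/2)) ^ (2:ℕ) + ((a-b) ^ (q/2)) ^ (2:ℕ) = S := by
      rw [sq (a+b) q hab, sq (a-b) q hamb, hS]
    rw [eS]
  -- apply the three lines theorem at θ = 2/q
  set θ : ℝ := 2/q with hθ
  have hθ0 : 0 ≤ θ := by positivity
  have hθ1 : θ ≤ 1 := by rw [hθ, div_le_one hq0]; exact hq2
  have hmem : ((θ:ℝ):ℂ) ∈ verticalClosedStrip 0 1 := by
    simp only [verticalClosedStrip, Set.mem_preimage, Complex.ofReal_re]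
    exact ⟨hθ0, hθ1⟩
  have had := norm_le_interp_of_mem_verticalClosedStrip₀₁' F hmem hd hBdd h0 h1
  -- compute F θ = S
  have hGpθ : G p ((θ:ℝ):ℂ) = ((1:ℝ):ℂ) := by
    simp only [hG, ← Complex.ofReal_mul, ← Complex.ofReal_sub]
    norm_cast
    rw [hθ]
    field_simp
    rw [hq]
    field_simp
    ring
  have hGqθ : G q ((θ:ℝ):ℂ) = ((q-1:ℝ):ℂ) := by
    simp only [hG, ← Complex.ofReal_mul, ← Complex.ofReal_sub]
    norm_cast
    rw [hθ]
    field_simp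
  have hFθ : F ((θ:ℝ):ℂ) = ((S:ℝ):ℂ) := by
    rw [hF]
    simp only [hGpθ, hGqθ]
    rw [show ((1:ℝ):ℂ) = (1:ℂ) by norm_num]
    rw [Complex.cpow_one, Complex.cpow_one,
      ← Complex.ofReal_cpow hab.le, ← Complex.ofReal_cpow hamb.le]
    rw [hS]
    have hr : (a+b)*((a+b)^(q-1)) + (a-b)*((a-b)^(q-1)) = (a+b)^q + (a-b)^q := by
      rw [mul_comm (a+b) _, mul_comm (a-b) _, ← Real.rpow_add_one hab.ne',
        ← Real.rpow_add_one hamb.ne']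
      ring_nf
    exact_mod_cast hr
  rw [hFθ] at had
  simp only [Complex.norm_real, Real.norm_eq_abs, Complex.ofReal_re,
    abs_of_pos hSpos] at had
  -- now: S ≤ (A*S) ^ (1-θ) * (sqrt(2A) * sqrt S) ^ θ
  have hθq : θ/2 = 1/q := by rw [hθ]; ring
  have hexp : 1 - θ + θ/2 = 1/p := by
    have h2 := hθq
    have h3 := hpq
    rw [hθ] at h2 ⊢
    linarith
  have hcalc : (A*S) ^ (1-θ) * (Real.sqrt (2*A) * Real.sqrt S) ^ θ
      = (2:ℝ) ^ (1/q) * (A ^ (1/p) * S ^ (1/p)) := by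
    have hsqrt : Real.sqrt (2*A) * Real.sqrt S = (2*A*S) ^ ((1:ℝ)/2) := by
      rw [← Real.sqrt_mul (by positivity), Real.sqrt_eq_rpow]
    have hpow : ((2*A*S) ^ ((1:ℝ)/2)) ^ θ = 2^(θ/2) * (A^(θ/2) * S^(θ/2)) := by
      rw [← Real.rpow_mul (by positivity), show (1:ℝ)/2*θ = θ/2 by ring,
        Real.mul_rpow (by positivity) hSpos.le,
        Real.mul_rpow (by norm_num) hApos.le, mul_assoc]
    calc (A*S) ^ (1-θ) * (Real.sqrt (2*A) * Real.sqrt S) ^ θ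
        = (A^(1-θ) * S^(1-θ)) * (2^(θ/2) * (A^(θ/2) * S^(θ/2))) := by
          rw [Real.mul_rpow hApos.le hSpos.le, hsqrt, hpow]
      _ = 2^(θ/2) * ((A^(1-θ) * A^(θ/2)) * (S^(1-θ) * S^(θ/2))) := by ring
      _ = (2:ℝ) ^ (1/q) * (A ^ (1/p) * S ^ (1/p)) := by
          rw [← Real.rpow_add hApos, ← Real.rpow_add hSpos, hexp, hθq]
  rw [hcalc] at had
  have hfin1 : S ^ ((1:ℝ)/p) * S ^ ((1:ℝ)/q) = S := by
    rw [← Real.rpow_add hSpos, hpq, Real.rpow_one]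
  have h6 : S^((1:ℝ)/q) ≤ 2^((1:ℝ)/q) * A^((1:ℝ)/p) := by
    have hpos : 0 < S^((1:ℝ)/p) := by positivity
    have h7 : S^((1:ℝ)/q) * S^((1:ℝ)/p) ≤ (2^((1:ℝ)/q) * A^((1:ℝ)/p)) * S^((1:ℝ)/p) := by
      calc S^((1:ℝ)/q) * S^((1:ℝ)/p) = S := by rw [mul_comm]; exact hfin1
        _ ≤ 2^((1:ℝ)/q) * (A^((1:ℝ)/p) * S^((1:ℝ)/p)) := had
        _ = (2^((1:ℝ)/q) * A^((1:ℝ)/p)) * S^((1:ℝ)/p) := by ring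
    exact le_of_mul_le_mul_right h7 hpos
  have h8 := Real.rpow_le_rpow (by positivity) h6 hq0.le
  have hL : (S^((1:ℝ)/q))^q = S := by
    rw [← Real.rpow_mul hSpos.le, one_div, inv_mul_cancel₀ hq0.ne', Real.rpow_one]
  have hR : ((2:ℝ)^((1:ℝ)/q) * A^((1:ℝ)/p))^q = 2 * A^(q/p) := by
    rw [Real.mul_rpow (by positivity) (by positivity),
      ← Real.rpow_mul (by norm_num : (0:ℝ) ≤ 2), ← Real.rpow_mul hApos.le,
      one_div, one_div, inv_mul_cancel₀ hq0.ne', Real.rpow_one,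
      show p⁻¹ * q = q/p by field_simp]
  rw [hL, hR] at h8
  exact h8

theorem stmt_12 (p x : ℝ) (hp1 : 1 < p) (hp2 : p ≤ 2) (hx0 : 0 ≤ x) (hx1 : x ≤ 1) :
    (((1 + x) / 2) ^ (p / (p - 1)) + ((1 - x) / 2) ^ (p / (p - 1))) ^ (p - 1) ≤
      (1 + x ^ p) / 2 := by
  have hp1' : (0:ℝ) < p - 1 := by linarith
  have hp0 : (0:ℝ) < p := by linarith
  set q : ℝ := p/(p-1) with hqdef
  have hq0 : 0 < q := div_pos hp0 hp1'
  have hqp : q * (p-1) = p := by rw [hqdef]; field_simp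
  have hexp1 : (1-q)*(p-1) = -1 := by linear_combination -hqp
  have hexp2 : q/p*(p-1) = 1 := by
    rw [div_mul_eq_mul_div, hqp, div_self hp0.ne']
  rcases eq_or_lt_of_le hx1 with h1 | h1
  · subst h1
    norm_num
    rw [Real.zero_rpow hq0.ne']
    simp [Real.one_rpow]
  rcases eq_or_lt_of_le hx0 with h0 | h0
  · rw [← h0]
    norm_num
    rw [Real.zero_rpow hp0.ne']
    have e1 : ((1:ℝ)/2)^q = 2^(-q) := by
      rw [show (1:ℝ)/2 = 2⁻¹ by norm_num, ← Real.rpow_neg_one,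
        ← Real.rpow_mul (by norm_num : (0:ℝ) ≤ 2)]
      norm_num
    rw [e1, show (2:ℝ)^(-q) + 2^(-q) = 2 * 2^(-q) by ring,
      show (2:ℝ) * 2^(-q) = 2^(1-q) by
        rw [Real.rpow_sub (by norm_num : (0:ℝ) < 2), Real.rpow_one, Real.rpow_neg
          (by norm_num : (0:ℝ) ≤ 2), div_eq_mul_inv],
      ← Real.rpow_mul (by norm_num : (0:ℝ) ≤ 2), hexp1, Real.rpow_neg_one]
    norm_num
  -- main case 0 < x < 1
  have key := rt2 p q (1/2) (x/2) hp1 hp2 hqdef (by positivity) (by linarith)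
  rw [show (1:ℝ)/2 + x/2 = (1+x)/2 by ring, show (1:ℝ)/2 - x/2 = (1-x)/2 by ring] at key
  have hsum : ((1:ℝ)/2)^p + (x/2)^p = (1+x^p)/2^p := by
    rw [Real.div_rpow hx0 (by norm_num), Real.div_rpow zero_le_one (by norm_num),
      Real.one_rpow]
    ring
  rw [hsum] at key
  have h2q : (2:ℝ) * ((1+x^p)/2^p)^(q/p) = 2^(1-q) * (1+x^p)^(q/p) := by
    rw [Real.div_rpow (show (0:ℝ) ≤ 1 + x^p by positivity)
        (show (0:ℝ) ≤ 2^p by positivity) (q/p),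
      ← Real.rpow_mul (by norm_num : (0:ℝ) ≤ 2), show p*(q/p) = q by field_simp,
      Real.rpow_sub (by norm_num : (0:ℝ) < 2), Real.rpow_one]
    ring
  rw [h2q] at key
  have hLnn : (0:ℝ) ≤ ((1+x)/2)^q + ((1-x)/2)^q :=
    add_nonneg (Real.rpow_nonneg (by linarith) q) (Real.rpow_nonneg (by linarith) q)
  have h3 := Real.rpow_le_rpow hLnn key hp1'.le
  refine h3.trans (le_of_eq ?_)
  rw [Real.mul_rpow (show (0:ℝ) ≤ 2^(1-q) by positivity)
      (show (0:ℝ) ≤ (1+x^p)^(q/p) by positivity),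
    ← Real.rpow_mul (by norm_num : (0:ℝ) ≤ 2), ← Real.rpow_mul (by positivity),
    hexp1, hexp2, Real.rpow_neg_one, Real.rpow_one]
  ring
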